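/- Let m ≥ 1 and n_c ≥ 5 be integers. Every phase-cohesive configuration θ of the 1D honeycomb graph G(m, n_c) has winding vector lying in the set {k ∈ ℤ : |k| ≤ ⌈n_c/4⌉ − 1}^m, i.e., for every p ∈ {0, ..., m−1}, the winding number of θ along the p-th basis cycle σ_p is an integer of absolute value at most ⌈n_c/4⌉ − 1. -/

import Mathlib

/-- The counterclockwise difference: the unique element of `[-π, π)` congruent to `x`
modulo `2π`. -/
noncomputable def dcc (x : ℝ) : ℝ :=
  x - 2 * Real.pi * ((⌊(x + Real.pi) / (2 * Real.pi)⌋ : ℤ) : ℝ)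

/-- Edge relation of the 1D honeycomb graph `G(m, n_c)` on vertices `{1, ..., m(n_c-1)+1}`. -/
def honEdge (m nc i j : ℕ) : Prop :=
  (1 ≤ i ∧ i ≤ m * (nc - 1) ∧ j = i + 1) ∨
  (1 ≤ j ∧ j ≤ m * (nc - 1) ∧ i = j + 1) ∨
  (∃ p, p < m ∧ ((i = p * (nc - 1) + 1 ∧ j = (p + 1) * (nc - 1) + 1) ∨
                 (j = p * (nc - 1) + 1 ∧ i = (p + 1) * (nc - 1) + 1)))

/-- The winding number of `θ` along the `p`-th basis cycle of the 1D honeycomb graph. -/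
noncomputable def windingP (nc : ℕ) (θ : ℕ → ℝ) (p : ℕ) : ℝ :=
  (1 / (2 * Real.pi)) *
    ((∑ j ∈ Finset.range (nc - 1),
        dcc (θ (p * (nc - 1) + 1 + j + 1) - θ (p * (nc - 1) + 1 + j))) +
      dcc (θ (p * (nc - 1) + 1) - θ ((p + 1) * (nc - 1) + 1)))

/-- every phase-cohesive configuration `θ` of the 1D honeycomb graph has
winding vector in `{k ∈ ℤ : |k| ≤ ⌈n_c/4⌉ - 1}^m`: for every `p < m` the winding number
of `θ` along the `p`-th basis cycle is an integer of absolute value at most `⌈n_c/4⌉ - 1`. -/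
theorem phase_cohesive_winding_vector_bound (m nc : ℕ) (hm : 1 ≤ m) (hnc : 5 ≤ nc)
    (θ : ℕ → ℝ)
    (hcoh : ∀ i j, honEdge m nc i j → |dcc (θ i - θ j)| < Real.pi / 2) :
    ∀ p, p < m → ∃ q : ℤ, windingP nc θ p = (q : ℝ) ∧ |q| ≤ ⌈(nc : ℚ) / 4⌉ - 1 := by
  intro p hp
  have hπ := Real.pi_pos
  set a := p * (nc - 1) + 1 with ha
  set b := (p + 1) * (nc - 1) + 1 with hb
  have hab : a + (nc - 1) = b := by
    rw [ha, hb, add_mul, one_mul]; ring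
  set k : ℕ → ℤ := fun j => ⌊(θ (a + j + 1) - θ (a + j) + Real.pi) / (2 * Real.pi)⌋ with hk
  set k' : ℤ := ⌊(θ a - θ b + Real.pi) / (2 * Real.pi)⌋ with hk'
  set K : ℤ := (∑ j ∈ Finset.range (nc - 1), k j) + k' with hK
  -- the edge cohesiveness on path edges
  have hpath : ∀ j ∈ Finset.range (nc - 1), |dcc (θ (a + j + 1) - θ (a + j))| < Real.pi / 2 := by
    intro j hj
    rw [Finset.mem_range] at hj
    apply hcoh
    right; left
    refine ⟨by omega, ?_, rfl⟩
    have h1 : (p + 1) * (nc - 1) ≤ m * (nc - 1) := Nat.mul_le_mul_right _ (by omega)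
    rw [add_mul, one_mul] at h1
    omega
  have hchord : |dcc (θ a - θ b)| < Real.pi / 2 := by
    apply hcoh
    right; right
    exact ⟨p, hp, Or.inl ⟨rfl, rfl⟩⟩
  -- key algebraic identity
  have hS : (∑ j ∈ Finset.range (nc - 1), dcc (θ (a + j + 1) - θ (a + j))) + dcc (θ a - θ b)
      = -(2 * Real.pi) * (K : ℝ) := by
    have e1 : ∀ j, dcc (θ (a + j + 1) - θ (a + j))
        = (θ (a + j + 1) - θ (a + j)) - 2 * Real.pi * (k j : ℝ) := fun j => rfl
    have e2 : dcc (θ a - θ b) = (θ a - θ b) - 2 * Real.pi * (k' : ℝ) := rfl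
    have htel : ∑ j ∈ Finset.range (nc - 1), (θ (a + j + 1) - θ (a + j))
        = θ (a + (nc - 1)) - θ (a + 0) := Finset.sum_range_sub (fun j => θ (a + j)) (nc - 1)
    rw [add_zero, hab] at htel
    simp only [e1, e2, Finset.sum_sub_distrib, htel]
    rw [← Finset.mul_sum, hK]
    push_cast
    ring
  have hwind : windingP nc θ p = (-K : ℤ) := by
    rw [windingP]
    rw [show p * (nc - 1) + 1 = a from rfl, show (p + 1) * (nc - 1) + 1 = b from rfl, hS]
    push_cast
    field_simp
  -- bound on |K|
  have hsum : |(∑ j ∈ Finset.range (nc - 1), dcc (θ (a + j + 1) - θ (a + j))) + dcc (θ a - θ b)|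
      < (nc : ℝ) * (Real.pi / 2) := by
    have h1 : |∑ j ∈ Finset.range (nc - 1), dcc (θ (a + j + 1) - θ (a + j))|
        ≤ ((nc - 1 : ℕ) : ℝ) * (Real.pi / 2) := by
      calc |∑ j ∈ Finset.range (nc - 1), dcc (θ (a + j + 1) - θ (a + j))|
          ≤ ∑ j ∈ Finset.range (nc - 1), |dcc (θ (a + j + 1) - θ (a + j))| :=
            Finset.abs_sum_le_sum_abs _ _
        _ ≤ ∑ j ∈ Finset.range (nc - 1), (Real.pi / 2) :=
            Finset.sum_le_sum (fun j hj => (hpath j hj).le)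
        _ = ((nc - 1 : ℕ) : ℝ) * (Real.pi / 2) := by
            rw [Finset.sum_const, Finset.card_range]; simp [nsmul_eq_mul]
    have h2 : ((nc - 1 : ℕ) : ℝ) = (nc : ℝ) - 1 := by
      have : (1 : ℕ) ≤ nc := by omega
      push_cast [Nat.cast_sub this]; ring
    calc |(∑ j ∈ Finset.range (nc - 1), dcc (θ (a + j + 1) - θ (a + j))) + dcc (θ a - θ b)|
        ≤ |∑ j ∈ Finset.range (nc - 1), dcc (θ (a + j + 1) - θ (a + j))| + |dcc (θ a - θ b)| :=
          abs_add_le _ _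
      _ < ((nc - 1 : ℕ) : ℝ) * (Real.pi / 2) + Real.pi / 2 := by
          exact add_lt_add_of_le_of_lt h1 hchord
      _ = (nc : ℝ) * (Real.pi / 2) := by rw [h2]; ring
  rw [hS] at hsum
  have hKabs : |(K : ℝ)| < (nc : ℝ) / 4 := by
    rw [abs_mul, abs_neg, abs_of_pos (by positivity : (0:ℝ) < 2 * Real.pi)] at hsum
    nlinarith [abs_nonneg ((K : ℝ))]
  refine ⟨-K, hwind, ?_⟩
  by_contra h
  push_neg at h
  have h1 : ⌈(nc : ℚ) / 4⌉ ≤ |(-K)| := by omega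
  have h2 : (nc : ℚ) / 4 ≤ (|(-K)| : ℤ) := le_trans (Int.le_ceil _) (by exact_mod_cast h1)
  have h3 : ((nc : ℚ) / 4 : ℚ) ≤ ((|(-K)| : ℤ) : ℚ) := h2
  have h4 : ((nc : ℚ) : ℝ) / 4 ≤ (((|(-K)| : ℤ) : ℚ) : ℝ) := by
    have := (Rat.cast_le (K := ℝ)).mpr h3
    push_cast at this ⊢
    linarith
  push_cast at h4
  rw [abs_neg] at h4
  linarith [hKabs]
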